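/- arXiv:1201.0011 — 5 statements merged into one kernel-verified Lean document; each statement's English description precedes it below -/
import Mathlib

section
/- Variational characterization of trace distance: Let ρ and σ be Hermitian complex square matrices over the same finite index type with Tr[ρ] = Tr[σ]. Then ‖ρ − σ‖₁ = 2 · max { Tr[M(ρ − σ)] : M Hermitian with 0 ≤ M ≤ I }; that is, 2·Tr[M(ρ−σ)] ≤ ‖ρ−σ‖₁ for every matrix M with 0 ≤ M ≤ I, and there exists such an M attaining equality. -/
open scoped Matrix ComplexOrder

/-- The trace norm `‖A‖₁ = Tr[√(AᴴA)]` of a complex square matrix. -/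
noncomputable def traceNorm {d : Type*} [Fintype d] [DecidableEq d]
    (A : Matrix d d ℂ) : ℝ :=
  (((Matrix.posSemidef_conjTranspose_mul_self A).1.eigenvectorUnitary : Matrix d d ℂ) *
      Matrix.diagonal ((fun x : ℝ => (x : ℂ)) ∘ Real.sqrt ∘ (Matrix.posSemidef_conjTranspose_mul_self A).1.eigenvalues) *
      (star ((Matrix.posSemidef_conjTranspose_mul_self A).1.eigenvectorUnitary : Matrix d d ℂ))).trace.re

namespace TraceDistAux

open Matrix

variable {d : Type*} [Fintype d] [DecidableEq d]

/-- Conjugation of a real diagonal matrix by a unitary. -/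
noncomputable def cf (U : Matrix.unitaryGroup d ℂ) (f : d → ℝ) : Matrix d d ℂ :=
  (U : Matrix d d ℂ) * diagonal (fun i => (f i : ℂ)) * star (U : Matrix d d ℂ)

lemma star_mul_cancel (U : Matrix.unitaryGroup d ℂ) (X : Matrix d d ℂ) :
    star (U : Matrix d d ℂ) * ((U : Matrix d d ℂ) * X) = X := by
  rw [← mul_assoc, U.2.1, one_mul]

lemma diag_cast_mul (f g : d → ℝ) :
    (diagonal (fun i => (f i : ℂ))) * (diagonal (fun i => (g i : ℂ)))
      = diagonal (fun i => ((f * g) i : ℂ)) := by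
  rw [diagonal_mul_diagonal]
  congr 1 with i
  push_cast [Pi.mul_apply]
  ring

lemma cf_mul (U : Matrix.unitaryGroup d ℂ) (f g : d → ℝ) :
    cf U f * cf U g = cf U (f * g) :=
  calc cf U f * cf U g
      = (U : Matrix d d ℂ) * ((diagonal fun i => (f i : ℂ)) *
        (star (U : Matrix d d ℂ) * ((U : Matrix d d ℂ) *
          ((diagonal fun i => (g i : ℂ)) * star (U : Matrix d d ℂ))))) := by
        simp only [cf, mul_assoc]
    _ = (U : Matrix d d ℂ) * ((diagonal fun i => (f i : ℂ)) *
        ((diagonal fun i => (g i : ℂ)) * star (U : Matrix d d ℂ))) := by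
        rw [star_mul_cancel]
    _ = cf U (f * g) := by
        rw [← mul_assoc (diagonal _), diag_cast_mul]
        simp only [cf, mul_assoc]

lemma cf_trace (U : Matrix.unitaryGroup d ℂ) (f : d → ℝ) :
    (cf U f).trace = ∑ i, (f i : ℂ) := by
  rw [cf, trace_mul_cycle, U.2.1, one_mul, trace_diagonal]

lemma cf_herm (U : Matrix.unitaryGroup d ℂ) (f : d → ℝ) : (cf U f).IsHermitian := by
  have h : (cf U f) = (U : Matrix d d ℂ) * diagonal (fun i => (f i : ℂ))
      * (U : Matrix d d ℂ)ᴴ := by rw [cf, star_eq_conjTranspose]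
  rw [h]
  apply isHermitian_mul_mul_conjTranspose
  rw [IsHermitian, diagonal_conjTranspose]
  congr 1 with i
  simp [Pi.star_def, Complex.conj_ofReal]

lemma cf_psd (U : Matrix.unitaryGroup d ℂ) (f : d → ℝ) (hf : ∀ i, 0 ≤ f i) :
    (cf U f).PosSemidef := by
  have h : (diagonal (fun i => (f i : ℂ))).PosSemidef :=
    posSemidef_diagonal_iff.mpr fun i => by
      simpa using Complex.zero_le_real.mpr (hf i)
  simpa [cf, star_eq_conjTranspose, mul_assoc] using
    h.mul_mul_conjTranspose_same (U : Matrix d d ℂ)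

lemma cf_one (U : Matrix.unitaryGroup d ℂ) : cf U 1 = 1 := by
  simp only [cf, Pi.one_apply, Complex.ofReal_one, diagonal_one, mul_one]
  exact U.2.2

lemma cf_sub (U : Matrix.unitaryGroup d ℂ) (f g : d → ℝ) :
    cf U (f - g) = cf U f - cf U g := by
  simp only [cf, ← sub_mul, ← Matrix.mul_sub, diagonal_sub]
  congr 2 with i
  push_cast [Pi.sub_apply]
  ring

lemma cf_spectral {A : Matrix d d ℂ} (hA : A.IsHermitian) :
    A = cf hA.eigenvectorUnitary hA.eigenvalues := by
  convert hA.spectral_theorem using 2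
  simp only [cf, Unitary.conjStarAlgAut_apply]
  rfl

lemma traceNorm_herm {A : Matrix d d ℂ} (hA : A.IsHermitian) :
    traceNorm A = ∑ i, |hA.eigenvalues i| := by
  have h1 : (cf hA.eigenvectorUnitary (fun i => |hA.eigenvalues i|)).PosSemidef :=
    cf_psd _ _ fun i => abs_nonneg _
  have hAA : Aᴴ * A = cf hA.eigenvectorUnitary hA.eigenvalues
      * cf hA.eigenvectorUnitary hA.eigenvalues := by
    rw [hA.eq]
    exact congrArg₂ HMul.hMul (cf_spectral hA) (cf_spectral hA)
  have h2 : (cf hA.eigenvectorUnitary (fun i => |hA.eigenvalues i|)) ^ 2 = Aᴴ * A := by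
    rw [sq, cf_mul, hAA, cf_mul]
    have h : ((fun i => |hA.eigenvalues i|) * fun i => |hA.eigenvalues i|)
        = hA.eigenvalues * hA.eigenvalues := by
      funext i
      exact abs_mul_abs_self _
    rw [h]
  have h3 : cfc Real.sqrt (Aᴴ * A) = cf hA.eigenvectorUnitary (fun i => |hA.eigenvalues i|) := by
    open scoped MatrixOrder in
    have hX := h1.nonneg
    rw [← h2, ← cfcₙ_eq_cfc, ← CFC.sqrt_eq_real_sqrt _ (h1.pow 2).nonneg, CFC.sqrt_sq _ hX]
  have h4 : traceNorm A = (cfc Real.sqrt (Aᴴ * A)).trace.re := by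
    rw [(posSemidef_conjTranspose_mul_self A).1.cfc_eq]; rfl
  rw [h4, h3, cf_trace, Complex.re_sum]
  simp

lemma psd_diag_re {N : Matrix d d ℂ} (hN : N.PosSemidef) (i : d) :
    0 ≤ (N i i).re ∧ (N i i).im = 0 := by
  have h : (0 : ℂ) ≤ N i i := by
    simpa [dotProduct, Pi.single_apply, apply_ite] using hN.diag_nonneg (i := i)
  rw [Complex.le_def] at h
  simpa using ⟨h.1, h.2.symm⟩

end TraceDistAux

open Matrix TraceDistAux in
/-- Variational characterization of the trace distance: for Hermitian `ρ`, `σ` of equal trace,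
`‖ρ − σ‖₁ = 2 · max { Tr[M(ρ − σ)] : 0 ≤ M ≤ I }`. -/
theorem trace_distance_variational {d : Type*} [Fintype d] [DecidableEq d]
    (ρ σ : Matrix d d ℂ) (hρ : ρ.IsHermitian) (hσ : σ.IsHermitian)
    (htr : ρ.trace = σ.trace) :
    (∀ M : Matrix d d ℂ, M.PosSemidef → ((1 : Matrix d d ℂ) - M).PosSemidef →
        2 * ((M * (ρ - σ)).trace).re ≤ traceNorm (ρ - σ)) ∧
    (∃ M : Matrix d d ℂ, M.IsHermitian ∧ M.PosSemidef ∧ ((1 : Matrix d d ℂ) - M).PosSemidef ∧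
        2 * ((M * (ρ - σ)).trace).re = traceNorm (ρ - σ)) := by
  have hΔ : (ρ - σ).IsHermitian := hρ.sub hσ
  set lam := hΔ.eigenvalues with hlam
  set U := hΔ.eigenvectorUnitary with hU
  have hspec : ρ - σ = cf U lam := cf_spectral hΔ
  have htn : traceNorm (ρ - σ) = ∑ i, |lam i| := traceNorm_herm hΔ
  -- sum of eigenvalues is zero
  have hsum0 : ∑ i, lam i = 0 := by
    have h0 : (ρ - σ).trace = 0 := by rw [trace_sub, htr, sub_self]
    rw [hspec, cf_trace] at h0
    have := congrArg Complex.re h0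
    simpa [Complex.re_sum] using this
  have key : ∑ i, |lam i| = 2 * ∑ i, max (lam i) 0 := by
    have habs : ∀ i : d, |lam i| = 2 * max (lam i) 0 - lam i := by
      intro i
      rcases le_total 0 (lam i) with h | h
      · rw [abs_of_nonneg h, max_eq_left h]; ring
      · rw [abs_of_nonpos h, max_eq_right h]; ring
    calc ∑ i, |lam i| = ∑ i, (2 * max (lam i) 0 - lam i) :=
          Finset.sum_congr rfl fun i _ => habs i
      _ = 2 * ∑ i, max (lam i) 0 := by
          rw [Finset.sum_sub_distrib, hsum0, sub_zero, Finset.mul_sum]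
  constructor
  · intro M hM hIM
    set N := star (U : Matrix d d ℂ) * M * (U : Matrix d d ℂ) with hN
    have hNpsd : N.PosSemidef := by
      exact hM.conjTranspose_mul_mul_same (U : Matrix d d ℂ)
    have hINpsd : ((1 : Matrix d d ℂ) - N).PosSemidef := by
      have h := hIM.conjTranspose_mul_mul_same (U : Matrix d d ℂ)
      have e : (U : Matrix d d ℂ)ᴴ * ((1 : Matrix d d ℂ) - M) * (U : Matrix d d ℂ)
          = 1 - N := by
        rw [Matrix.mul_sub, Matrix.sub_mul, mul_one, hN, ← star_eq_conjTranspose, U.2.1]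
      rwa [e] at h
    have traceform : (M * (ρ - σ)).trace = ∑ i, N i i * (lam i : ℂ) := by
      rw [hspec, cf]
      have e1 : M * ((U : Matrix d d ℂ) * diagonal (fun i => (lam i : ℂ))
          * star (U : Matrix d d ℂ))
          = (M * (U : Matrix d d ℂ) * diagonal (fun i => (lam i : ℂ)))
            * star (U : Matrix d d ℂ) := by
        simp only [mul_assoc]
      rw [e1, trace_mul_comm]
      have e2 : star (U : Matrix d d ℂ) * (M * (U : Matrix d d ℂ)
          * diagonal (fun i => (lam i : ℂ)))
          = N * diagonal (fun i => (lam i : ℂ)) := by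
        simp only [hN, mul_assoc]
      rw [e2]
      simp [Matrix.trace, Matrix.diag, Matrix.mul_diagonal]
    have hre : ((M * (ρ - σ)).trace).re = ∑ i, (N i i).re * lam i := by
      rw [traceform, Complex.re_sum]
      exact Finset.sum_congr rfl fun i _ => by simp [Complex.mul_re]
    rw [hre, htn, key]
    have hbound : ∑ i, (N i i).re * lam i ≤ ∑ i, max (lam i) 0 := by
      apply Finset.sum_le_sum
      intro i _
      have h0 : 0 ≤ (N i i).re := (psd_diag_re hNpsd i).1
      have h1 : (N i i).re ≤ 1 := by
        have := (psd_diag_re hINpsd i).1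
        simpa using this
      rcases le_total 0 (lam i) with h | h
      · calc (N i i).re * lam i ≤ 1 * lam i := mul_le_mul_of_nonneg_right h1 h
          _ = lam i := one_mul _
          _ ≤ max (lam i) 0 := le_max_left _ _
      · calc (N i i).re * lam i ≤ 0 := mul_nonpos_of_nonneg_of_nonpos h0 h
          _ ≤ max (lam i) 0 := le_max_right _ _
    linarith
  · refine ⟨cf U (fun i => if 0 < lam i then 1 else 0), cf_herm _ _,
      cf_psd _ _ (fun i => by split <;> norm_num), ?_, ?_⟩
    · rw [← cf_one U, ← cf_sub]
      exact cf_psd _ _ fun i => by simp only [Pi.sub_apply, Pi.one_apply]; split <;> norm_num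
    · rw [hspec, cf_mul]
      have h : ((fun i => if 0 < lam i then (1:ℝ) else 0) * lam) = fun i => max (lam i) 0 := by
        funext i
        simp only [Pi.mul_apply]
        split
        · next h => rw [one_mul, max_eq_left (le_of_lt h)]
        · next h => rw [zero_mul, max_eq_right (le_of_not_gt h)]
      rw [h, cf_trace, Complex.re_sum, ← hspec, htn, key]
      simp
end

section
/- Hayashi–Nagaoka operator inequality (Lemma 2): Let S and T be complex square matrices over the same finite index type with T positive semidefinite and 0 ≤ S ≤ I, and suppose that S + T is positive definite. Then I − (S+T)^{−1/2} S (S+T)^{−1/2} ≤ 2(I − S) + 4T, where (S+T)^{−1/2} denotes the inverse of the positive definite square root of S + T. -/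
open scoped Matrix ComplexOrder

noncomputable def Matrix.PosSemidef.sqrt {n 𝕜 : Type*} [Fintype n] [RCLike 𝕜] [DecidableEq n]
    {A : Matrix n n 𝕜} (hA : A.PosSemidef) : Matrix n n 𝕜 :=
  hA.1.eigenvectorUnitary.1 * Matrix.diagonal ((↑) ∘ (√·) ∘ hA.1.eigenvalues) *
    (star hA.1.eigenvectorUnitary : Matrix n n 𝕜)

lemma Matrix.PosSemidef.posSemidef_sqrt {n 𝕜 : Type*} [Fintype n] [RCLike 𝕜] [DecidableEq n]
    {A : Matrix n n 𝕜} (hA : A.PosSemidef) : hA.sqrt.PosSemidef := by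
  have hD : (Matrix.diagonal ((↑) ∘ (√·) ∘ hA.1.eigenvalues : n → 𝕜)).PosSemidef := by
    apply Matrix.PosSemidef.diagonal
    intro i
    simp [Real.sqrt_nonneg]
  have := hD.mul_mul_conjTranspose_same (hA.1.eigenvectorUnitary : Matrix n n 𝕜)
  simpa [Matrix.PosSemidef.sqrt, Matrix.star_eq_conjTranspose] using this

lemma Matrix.PosSemidef.sqrt_mul_self {n 𝕜 : Type*} [Fintype n] [RCLike 𝕜] [DecidableEq n]
    {A : Matrix n n 𝕜} (hA : A.PosSemidef) : hA.sqrt * hA.sqrt = A := by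
  have hU : (star hA.1.eigenvectorUnitary : Matrix n n 𝕜) * hA.1.eigenvectorUnitary.1 = 1 :=
    Unitary.coe_star_mul_self _
  have hDD : Matrix.diagonal ((↑) ∘ (√·) ∘ hA.1.eigenvalues : n → 𝕜) *
      Matrix.diagonal ((↑) ∘ (√·) ∘ hA.1.eigenvalues : n → 𝕜) =
      Matrix.diagonal (RCLike.ofReal ∘ hA.1.eigenvalues) := by
    rw [Matrix.diagonal_mul_diagonal]
    congr 1
    funext i
    simp only [Function.comp_apply]
    rw [← RCLike.ofReal_mul, Real.mul_self_sqrt (hA.eigenvalues_nonneg i)]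
  conv_rhs => rw [hA.1.spectral_theorem]
  rw [Unitary.conjStarAlgAut_apply, Matrix.PosSemidef.sqrt]
  calc _ = hA.1.eigenvectorUnitary.1 * (Matrix.diagonal ((↑) ∘ (√·) ∘ hA.1.eigenvalues : n → 𝕜) *
      ((star hA.1.eigenvectorUnitary : Matrix n n 𝕜) * hA.1.eigenvectorUnitary.1) *
      Matrix.diagonal ((↑) ∘ (√·) ∘ hA.1.eigenvalues : n → 𝕜)) *
      (star hA.1.eigenvectorUnitary : Matrix n n 𝕜) := by simp only [Matrix.mul_assoc]
    _ = _ := by rw [hU, Matrix.mul_one, hDD]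

open Matrix in
private lemma psd_of_eigenvalues {d : Type*} [Fintype d] [DecidableEq d]
    {D : Matrix d d ℂ} (hD : D.IsHermitian) (h : ∀ i, 0 ≤ hD.eigenvalues i) :
    D.PosSemidef := by
  have hdiag : (Matrix.diagonal (RCLike.ofReal ∘ hD.eigenvalues : d → ℂ)).PosSemidef := by
    apply Matrix.PosSemidef.diagonal
    intro i
    simpa using Complex.zero_le_real.mpr (h i)
  have := hdiag.mul_mul_conjTranspose_same (hD.eigenvectorUnitary : Matrix d d ℂ)
  rw [hD.spectral_theorem]
  simpa [Matrix.star_eq_conjTranspose] using this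

open Matrix in
private lemma psd_mulVec_zero {d : Type*} [Fintype d] [DecidableEq d]
    {M : Matrix d d ℂ} (hM : M.PosSemidef) {x : d → ℂ}
    (hx : star x ⬝ᵥ M *ᵥ x = 0) : M *ᵥ x = 0 := by
  have hC := hM.posSemidef_sqrt
  have hCC := hM.sqrt_mul_self
  set C := hM.sqrt with hCdef
  have h1 : star (C *ᵥ x) ⬝ᵥ (C *ᵥ x) = 0 := by
    rw [star_mulVec, hC.1, ← Matrix.dotProduct_mulVec, Matrix.mulVec_mulVec, hCC]
    exact hx
  have h2 : C *ᵥ x = 0 := dotProduct_star_self_eq_zero.mp h1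
  rw [← hCC, ← Matrix.mulVec_mulVec, h2, Matrix.mulVec_zero]

open Matrix in
private lemma sub_psd_of_sq {d : Type*} [Fintype d] [DecidableEq d]
    {A B : Matrix d d ℂ} (hA : A.PosSemidef) (hB : B.PosDef)
    (h : (B * B - A * A).PosSemidef) : (B - A).PosSemidef := by
  have hD : (B - A).IsHermitian := hB.isHermitian.sub hA.isHermitian
  apply psd_of_eigenvalues hD
  intro i
  by_contra hμ
  push_neg at hμ
  set μ := hD.eigenvalues i with hμdef
  set v := ⇑(hD.eigenvectorBasis i) with hvdef
  have hv0 : v ≠ 0 := by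
    have hne := hD.eigenvectorBasis.orthonormal.ne_zero i
    intro hc
    apply hne
    ext j
    exact congrFun hc j
  have hv' : (B - A) *ᵥ v = (μ : ℂ) • v := by
    rw [hD.mulVec_eigenvectorBasis i, RCLike.real_smul_eq_coe_smul (K := ℂ)]
    rfl
  have hrow : star v ᵥ* (B - A) = (μ : ℂ) • star v := by
    rw [← hD.eq, ← star_mulVec, hv', star_smul]
    simp
  have h_sum : star v ⬝ᵥ ((B * B - A * A) *ᵥ v)
      = (μ : ℂ) * (star v ⬝ᵥ (B *ᵥ v) + star v ⬝ᵥ (A *ᵥ v)) := by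
    calc star v ⬝ᵥ ((B * B - A * A) *ᵥ v)
        = star v ⬝ᵥ (B *ᵥ ((B - A) *ᵥ v)) + star v ⬝ᵥ ((B - A) *ᵥ (A *ᵥ v)) := by
          rw [Matrix.mulVec_mulVec, Matrix.mulVec_mulVec, ← dotProduct_add,
            ← Matrix.add_mulVec,
            show B * (B - A) + (B - A) * A = B * B - A * A from by noncomm_ring]
      _ = (μ : ℂ) * (star v ⬝ᵥ (B *ᵥ v)) + (μ : ℂ) * (star v ⬝ᵥ (A *ᵥ v)) := by
          rw [Matrix.dotProduct_mulVec (star v) (B - A), hrow, smul_dotProduct,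
            smul_eq_mul, hv', Matrix.mulVec_smul, dotProduct_smul, smul_eq_mul]
      _ = (μ : ℂ) * (star v ⬝ᵥ (B *ᵥ v) + star v ⬝ᵥ (A *ᵥ v)) := by ring
  have hge : (0 : ℂ) ≤ (μ : ℂ) * (star v ⬝ᵥ (B *ᵥ v) + star v ⬝ᵥ (A *ᵥ v)) := by
    rw [← h_sum]; exact h.dotProduct_mulVec_nonneg v
  have hpos : (0 : ℂ) < star v ⬝ᵥ (B *ᵥ v) + star v ⬝ᵥ (A *ᵥ v) :=
    add_pos_of_pos_of_nonneg (hB.dotProduct_mulVec_pos hv0) (hA.dotProduct_mulVec_nonneg v)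
  have hneg : (0 : ℂ) < ((-μ : ℝ) : ℂ) := by
    rw [Complex.zero_lt_real]
    linarith
  have hlt : (0 : ℂ) < ((-μ : ℝ) : ℂ) * (star v ⬝ᵥ (B *ᵥ v) + star v ⬝ᵥ (A *ᵥ v)) :=
    mul_pos hneg hpos
  have : ((-μ : ℝ) : ℂ) * (star v ⬝ᵥ (B *ᵥ v) + star v ⬝ᵥ (A *ᵥ v))
      = -((μ : ℂ) * (star v ⬝ᵥ (B *ᵥ v) + star v ⬝ᵥ (A *ᵥ v))) := by
    push_cast
    ring
  rw [this] at hlt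
  have h0 : (0 : ℂ) < 0 := by
    have := add_pos_of_nonneg_of_pos hge hlt
    simpa using this
  exact absurd h0 (lt_irrefl 0)

open Matrix in
private lemma psd_smul' {d : Type*} [Fintype d] [DecidableEq d]
    {X : Matrix d d ℂ} (hX : X.PosSemidef) {c : ℂ} (hc : 0 ≤ c) :
    (c • X).PosSemidef := by
  have hcr : star c = c := by
    rw [Complex.le_def] at hc
    rw [RCLike.star_def, Complex.conj_eq_iff_im]
    exact hc.2.symm
  apply Matrix.PosSemidef.of_dotProduct_mulVec_nonneg
  · rw [Matrix.IsHermitian, Matrix.conjTranspose_smul, hcr, hX.1.eq]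
  · intro x
    rw [Matrix.smul_mulVec, dotProduct_smul, smul_eq_mul]
    exact mul_nonneg hc (hX.dotProduct_mulVec_nonneg x)

/-- Hayashi–Nagaoka operator inequality: if `0 ≤ T`, `0 ≤ S ≤ I` and `S + T` is positive
definite, then `I − (S+T)^{−1/2} S (S+T)^{−1/2} ≤ 2(I − S) + 4T`, where `(S+T)^{−1/2}` is the
inverse of the positive semidefinite square root of `S + T`. -/
theorem hayashi_nagaoka {d : Type*} [Fintype d] [DecidableEq d]
    (S T : Matrix d d ℂ) (hT : T.PosSemidef)
    (hS : S.PosSemidef) (hSI : ((1 : Matrix d d ℂ) - S).PosSemidef)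
    (hST : (S + T).PosDef) :
    ((2 : ℂ) • ((1 : Matrix d d ℂ) - S) + (4 : ℂ) • T -
      ((1 : Matrix d d ℂ) -
        (hST.posSemidef.sqrt)⁻¹ * S * (hST.posSemidef.sqrt)⁻¹)).PosSemidef := by
  classical
  have hMpsd : (hST.posSemidef.sqrt).PosSemidef := hST.posSemidef.posSemidef_sqrt
  have hMM : hST.posSemidef.sqrt * hST.posSemidef.sqrt = S + T := hST.posSemidef.sqrt_mul_self
  set M := hST.posSemidef.sqrt with hMdef
  have hMH : M.IsHermitian := hMpsd.1
  have hMpd : M.PosDef := by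
    refine Matrix.PosDef.of_dotProduct_mulVec_pos hMH (fun x hx => ?_)
    rcases lt_or_eq_of_le (hMpsd.dotProduct_mulVec_nonneg x) with hlt | heq
    · exact hlt
    · exfalso
      have hMx : M *ᵥ x = 0 := psd_mulVec_zero hMpsd heq.symm
      have h0 : star x ⬝ᵥ ((S + T) *ᵥ x) = 0 := by
        rw [← hMM, ← Matrix.mulVec_mulVec, hMx, Matrix.mulVec_zero, dotProduct_zero]
      exact absurd h0 (ne_of_gt (hST.dotProduct_mulVec_pos hx))
  have hdet : IsUnit M.det := by
    have h1 : M.det * M.det = (S + T).det := by rw [← Matrix.det_mul, hMM]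
    have h2 : (S + T).det ≠ 0 := ne_of_gt hST.det_pos
    exact isUnit_iff_ne_zero.mpr (fun hM0 => h2 (by rw [← h1, hM0, zero_mul]))
  set N := M⁻¹ with hNdef
  have hNM : N * M = 1 := Matrix.nonsing_inv_mul M hdet
  have hMN : M * N = 1 := Matrix.mul_nonsing_inv M hdet
  have hNH : N.IsHermitian := hMH.inv
  -- piece 1 : M - S is PSD
  have hMS : (M - S).PosSemidef := by
    apply sub_psd_of_sq hS hMpd
    rw [hMM]
    have hC := hS.posSemidef_sqrt
    have hCC := hS.sqrt_mul_self
    set C := hS.sqrt with hCdef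
    have hsq : (S - S * S).PosSemidef := by
      have h1 := hSI.mul_mul_conjTranspose_same C
      rw [hC.1] at h1
      have h2 : C * (1 - S) * C = S - S * S := by
        rw [← hCC]
        noncomm_ring
      rwa [h2] at h1
    have h3 : S + T - S * S = (S - S * S) + T := by abel
    rw [h3]
    exact hsq.add hT
  -- piece 2 : (N - 1) S (N - 1) is PSD
  have h2 : ((N - 1) * S * (N - 1)).PosSemidef := by
    have := hS.mul_mul_conjTranspose_same (N - 1)
    rwa [show (N - 1)ᴴ = N - 1 from by
      rw [Matrix.conjTranspose_sub, Matrix.conjTranspose_one, hNH.eq]] at this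
  -- piece 3 : (N - 2) T (N - 2) is PSD
  have h3 : ((N - (2 : ℂ) • 1) * T * (N - (2 : ℂ) • 1)).PosSemidef := by
    have := hT.mul_mul_conjTranspose_same (N - (2 : ℂ) • 1)
    rwa [show (N - (2 : ℂ) • 1)ᴴ = N - (2 : ℂ) • 1 from by
      rw [Matrix.conjTranspose_sub, Matrix.conjTranspose_smul, Matrix.conjTranspose_one, hNH.eq]
      norm_num] at this
  -- the algebraic identity
  have hA' : N * S + N * T = M := by
    rw [← mul_add, ← hMM, ← mul_assoc, hNM, one_mul]
  have hB' : S * N + T * N = M := by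
    rw [← add_mul, ← hMM, mul_assoc, hMN, mul_one]
  have hC' : N * S * N + N * T * N = 1 := by
    rw [← add_mul, hA', hMN]
  have expand : (4 : ℂ) • (M - S) + (2 : ℂ) • ((N - 1) * S * (N - 1))
        + ((N - (2 : ℂ) • 1) * T * (N - (2 : ℂ) • 1))
      = (4 : ℂ) • M - (2 : ℂ) • S + (4 : ℂ) • T + N * S * N + (N * S * N + N * T * N)
        - (2 : ℂ) • (N * S + N * T) - (2 : ℂ) • (S * N + T * N) := by
    simp only [mul_sub, sub_mul, mul_one, one_mul, smul_mul_assoc, mul_smul_comm,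
      smul_sub, smul_add, smul_smul]
    module
  have key : (2 : ℂ) • ((1 : Matrix d d ℂ) - S) + (4 : ℂ) • T -
      ((1 : Matrix d d ℂ) - N * S * N)
      = (4 : ℂ) • (M - S) + (2 : ℂ) • ((N - 1) * S * (N - 1))
        + ((N - (2 : ℂ) • 1) * T * (N - (2 : ℂ) • 1)) := by
    rw [expand, hA', hB', hC']
    module
  rw [key]
  have hc2 : (0 : ℂ) ≤ (2 : ℂ) := by
    rw [show (2 : ℂ) = ((2 : ℝ) : ℂ) from by norm_num, Complex.zero_le_real]; norm_num
  have hc4 : (0 : ℂ) ≤ (4 : ℂ) := by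
    rw [show (4 : ℂ) = ((4 : ℝ) : ℂ) from by norm_num, Complex.zero_le_real]; norm_num
  exact ((psd_smul' hMS hc4).add (psd_smul' h2 hc2)).add h3
end

section
/- Operator union bound for tensor products (Lemma 3): Let P be a complex square matrix over a finite index type A with 0 ≤ P ≤ I^A, and Q a complex square matrix over a finite index type B with 0 ≤ Q ≤ I^B. Then I^{AB} − P ⊗ Q ≤ (I^A − P) ⊗ I^B + I^A ⊗ (I^B − Q), where ⊗ denotes the Kronecker product and I^{AB} = I^A ⊗ I^B. -/
open scoped Matrix ComplexOrder Kronecker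

lemma kron_conjTranspose {A B : Type*} [Fintype A] [Fintype B]
    (X : Matrix A A ℂ) (Y : Matrix B B ℂ) : (X ⊗ₖ Y)ᴴ = Xᴴ ⊗ₖ Yᴴ := by
  ext ⟨a, b⟩ ⟨c, d⟩
  simp [Matrix.conjTranspose_apply, mul_comm]

lemma kron_posSemidef {A B : Type*} [Fintype A] [DecidableEq A] [Fintype B] [DecidableEq B]
    {X : Matrix A A ℂ} {Y : Matrix B B ℂ} (hX : X.PosSemidef) (hY : Y.PosSemidef) :
    (X ⊗ₖ Y).PosSemidef := by
  exact Matrix.PosSemidef.kronecker hX hY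

/-- Operator union bound for tensor products: if `0 ≤ P ≤ I^A` and `0 ≤ Q ≤ I^B`, then
`I^{AB} − P ⊗ Q ≤ (I^A − P) ⊗ I^B + I^A ⊗ (I^B − Q)`. -/
theorem operator_union_bound {A B : Type*} [Fintype A] [DecidableEq A]
    [Fintype B] [DecidableEq B]
    (P : Matrix A A ℂ) (Q : Matrix B B ℂ)
    (hP : P.PosSemidef) (hPI : ((1 : Matrix A A ℂ) - P).PosSemidef)
    (hQ : Q.PosSemidef) (hQI : ((1 : Matrix B B ℂ) - Q).PosSemidef) :
    ((((1 : Matrix A A ℂ) - P) ⊗ₖ (1 : Matrix B B ℂ) +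
        (1 : Matrix A A ℂ) ⊗ₖ ((1 : Matrix B B ℂ) - Q)) -
      ((1 : Matrix (A × B) (A × B) ℂ) - P ⊗ₖ Q)).PosSemidef := by
  have key : ((((1 : Matrix A A ℂ) - P) ⊗ₖ (1 : Matrix B B ℂ) +
        (1 : Matrix A A ℂ) ⊗ₖ ((1 : Matrix B B ℂ) - Q)) -
      ((1 : Matrix (A × B) (A × B) ℂ) - P ⊗ₖ Q)) =
      ((1 : Matrix A A ℂ) - P) ⊗ₖ ((1 : Matrix B B ℂ) - Q) := by
    ext ⟨a, b⟩ ⟨c, d⟩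
    simp [Matrix.one_apply, Matrix.sub_apply, Matrix.add_apply, Prod.ext_iff]
    split_ifs <;> simp_all <;> ring
  rw [key]
  exact kron_posSemidef hPI hQI
end

section
/- Tensor-product error decomposition: Let P, ρ be complex square matrices over a finite index type A and Q, σ complex square matrices over a finite index type B, with 0 ≤ P ≤ I^A, 0 ≤ Q ≤ I^B, and ρ, σ positive semidefinite. Then Tr[(I^{AB} − P ⊗ Q)(ρ ⊗ σ)] ≤ Tr[(I^A − P)ρ] · Tr[σ] + Tr[ρ] · Tr[(I^B − Q)σ], where ⊗ is the Kronecker product and I^{AB} = I^A ⊗ I^B. -/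
open scoped Matrix ComplexOrder Kronecker

private lemma psd_trace_nonneg {n : Type*} [Fintype n] [DecidableEq n]
    {X : Matrix n n ℂ} (hX : X.PosSemidef) : 0 ≤ X.trace := by
  exact hX.trace_nonneg

private lemma trace_mul_psd_nonneg {n : Type*} [Fintype n] [DecidableEq n]
    {X Y : Matrix n n ℂ} (hX : X.PosSemidef) (hY : Y.PosSemidef) :
    0 ≤ (X * Y).trace := by
  open scoped MatrixOrder in
  obtain ⟨S, hSpsd, hSS⟩ : ∃ S : Matrix n n ℂ, S.PosSemidef ∧ S * S = Y :=
    ⟨CFC.sqrt Y, Matrix.nonneg_iff_posSemidef.mp (CFC.sqrt_nonneg Y), CFC.sqrt_mul_sqrt_self Y hY.nonneg⟩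
  have h : (X * Y).trace = (S * X * S).trace := by
    conv_lhs => rw [← hSS]
    rw [← Matrix.mul_assoc, Matrix.trace_mul_cycle]
  rw [h]
  have hpsd : (S * X * S).PosSemidef := by
    simpa [hSpsd.1.eq] using hX.mul_mul_conjTranspose_same S
  exact psd_trace_nonneg hpsd

/-- Tensor-product error decomposition: for `0 ≤ P ≤ I^A`, `0 ≤ Q ≤ I^B` and positive
semidefinite `ρ`, `σ`,
`Tr[(I^{AB} − P⊗Q)(ρ⊗σ)] ≤ Tr[(I^A − P)ρ]·Tr[σ] + Tr[ρ]·Tr[(I^B − Q)σ]`. -/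
theorem tensor_error_decomposition {A B : Type*} [Fintype A] [DecidableEq A]
    [Fintype B] [DecidableEq B]
    (P ρ : Matrix A A ℂ) (Q σ : Matrix B B ℂ)
    (hP : P.PosSemidef) (hPI : ((1 : Matrix A A ℂ) - P).PosSemidef)
    (hQ : Q.PosSemidef) (hQI : ((1 : Matrix B B ℂ) - Q).PosSemidef)
    (hρ : ρ.PosSemidef) (hσ : σ.PosSemidef) :
    ((((1 : Matrix (A × B) (A × B) ℂ) - P ⊗ₖ Q) * (ρ ⊗ₖ σ)).trace).re ≤
      ((((1 : Matrix A A ℂ) - P) * ρ).trace).re * (σ.trace).re +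
        (ρ.trace).re * ((((1 : Matrix B B ℂ) - Q) * σ).trace).re := by
  have hdecomp : (1 : Matrix (A × B) (A × B) ℂ) - P ⊗ₖ Q
      = ((1 : Matrix A A ℂ) - P) ⊗ₖ (1 : Matrix B B ℂ) + P ⊗ₖ ((1 : Matrix B B ℂ) - Q) := by
    ext ⟨i, j⟩ ⟨k, l⟩
    simp [Matrix.kroneckerMap_apply, Matrix.one_apply, Prod.ext_iff, ite_and,
      Matrix.sub_apply, Matrix.add_apply]
    split_ifs <;> ring
  have hLHS : ((1 : Matrix (A × B) (A × B) ℂ) - P ⊗ₖ Q) * (ρ ⊗ₖ σ)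
      = (((1 : Matrix A A ℂ) - P) * ρ) ⊗ₖ ((1 : Matrix B B ℂ) * σ)
        + (P * ρ) ⊗ₖ (((1 : Matrix B B ℂ) - Q) * σ) := by
    rw [hdecomp, add_mul, Matrix.mul_kronecker_mul, Matrix.mul_kronecker_mul]
  rw [hLHS, Matrix.trace_add, Matrix.trace_kronecker, Matrix.trace_kronecker, one_mul]
  have h1 : 0 ≤ (((1 : Matrix A A ℂ) - P) * ρ).trace := trace_mul_psd_nonneg hPI hρ
  have h2 : 0 ≤ (P * ρ).trace := trace_mul_psd_nonneg hP hρ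
  have h3 : 0 ≤ (((1 : Matrix B B ℂ) - Q) * σ).trace := trace_mul_psd_nonneg hQI hσ
  have h4 : 0 ≤ σ.trace := psd_trace_nonneg hσ
  -- real parts
  have h1r : (0:ℝ) ≤ (((1 : Matrix A A ℂ) - P) * ρ).trace.re := by
    simpa using (Complex.le_def.mp h1).1
  have h2r : (0:ℝ) ≤ (P * ρ).trace.re := by simpa using (Complex.le_def.mp h2).1
  have h3r : (0:ℝ) ≤ (((1 : Matrix B B ℂ) - Q) * σ).trace.re := by
    simpa using (Complex.le_def.mp h3).1
  have h4r : (0:ℝ) ≤ σ.trace.re := by simpa using (Complex.le_def.mp h4).1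
  have h2i : (P * ρ).trace.im = 0 := by simpa using (Complex.le_def.mp h2).2.symm
  have h3i : (((1 : Matrix B B ℂ) - Q) * σ).trace.im = 0 := by
    simpa using (Complex.le_def.mp h3).2.symm
  have h4i : σ.trace.im = 0 := by simpa using (Complex.le_def.mp h4).2.symm
  have key : (P * ρ).trace.re ≤ ρ.trace.re := by
    have hsum : ρ.trace = (((1 : Matrix A A ℂ) - P) * ρ).trace + (P * ρ).trace := by
      rw [← Matrix.trace_add, ← add_mul]; simp
    rw [hsum, Complex.add_re]
    linarith
  simp only [Complex.add_re, Complex.mul_re, h2i, h3i, h4i]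
  nlinarith [mul_le_mul_of_nonneg_right key h3r]
end

section
/- Double sandwich bound: Let ρ and ρ̄ be positive semidefinite complex square matrices over a fixed finite index type with Tr[ρ] ≤ 1. Let Π' be a positive semidefinite matrix and a ≥ 0 with Π' ≤ a·ρ̄ (positive semidefinite order). Let Π₂ and D be matrices with 0 ≤ Π₂ ≤ I and 0 ≤ D ≤ I, and b ≥ 0 with Π₂ ρ̄ Π₂ ≤ b·Π₂. Then Tr[D Π₂ Π' Π₂ D ρ] ≤ a·b. -/
open scoped Matrix ComplexOrder

section aux
variable {d : Type*} [Fintype d] [DecidableEq d]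

private lemma tr_nonneg {A : Matrix d d ℂ} (hA : A.PosSemidef) : 0 ≤ A.trace :=
  Finset.sum_nonneg fun i _ => by
    simpa [dotProduct, Pi.single_apply] using hA.dotProduct_mulVec_nonneg (Pi.single i 1)

private lemma tr_mul_nonneg {A B : Matrix d d ℂ} (hA : A.PosSemidef) (hB : B.PosSemidef) :
    0 ≤ (A * B).trace := by
  obtain ⟨C, rfl⟩ : ∃ C : Matrix d d ℂ, A = Cᴴ * C := by
    open MatrixOrder in
    obtain ⟨X, hX, -, hXA⟩ := CFC.exists_sqrt_of_isSelfAdjoint_of_quasispectrumRestricts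
      hA.isHermitian (QuasispectrumRestricts.nnreal_of_nonneg hA.nonneg)
    exact ⟨X, by rw [← hXA, ← Matrix.star_eq_conjTranspose, hX.star_eq]⟩
  rw [Matrix.mul_assoc, Matrix.trace_mul_comm]
  exact tr_nonneg (hB.mul_mul_conjTranspose_same C)

private lemma tr_mul_mono {A B C : Matrix d d ℂ} (hAB : (B - A).PosSemidef) (hC : C.PosSemidef) :
    (A * C).trace ≤ (B * C).trace := by
  have h := tr_mul_nonneg hAB hC
  rw [Matrix.sub_mul, Matrix.trace_sub] at h
  exact sub_nonneg.mp h

private lemma sq_le_one {D : Matrix d d ℂ} (hD : D.PosSemidef)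
    (hDI : ((1 : Matrix d d ℂ) - D).PosSemidef) :
    ((1 : Matrix d d ℂ) - D * D).PosSemidef := by
  have hH := hD.1
  have hev0 : ∀ i, 0 ≤ hH.eigenvalues i := hD.eigenvalues_nonneg
  have hev1 : ∀ i, hH.eigenvalues i ≤ 1 := by
    intro i
    have hnorm : star (⇑(hH.eigenvectorBasis i)) ⬝ᵥ (⇑(hH.eigenvectorBasis i)) = 1 := by
      have h1 : (inner ℂ (hH.eigenvectorBasis i) (hH.eigenvectorBasis i) : ℂ) = 1 := by
        rw [inner_self_eq_norm_sq_to_K, hH.eigenvectorBasis.orthonormal.1 i]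
        norm_num
      rwa [EuclideanSpace.inner_eq_star_dotProduct, dotProduct_comm] at h1
    have hv := hDI.dotProduct_mulVec_nonneg (⇑(hH.eigenvectorBasis i))
    rw [Matrix.sub_mulVec, Matrix.one_mulVec, hH.mulVec_eigenvectorBasis,
      dotProduct_sub, dotProduct_smul, hnorm] at hv
    have : (0 : ℂ) ≤ 1 - (hH.eigenvalues i : ℂ) := by simpa using hv
    have := (Complex.le_def.mp this).1
    simpa using this
  set V : Matrix d d ℂ := (Matrix.IsHermitian.eigenvectorUnitary hH : Matrix d d ℂ) with hV
  set Λ : Matrix d d ℂ := Matrix.diagonal (RCLike.ofReal ∘ hH.eigenvalues) with hΛ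
  have hs : D = V * Λ * star V := hH.spectral_theorem
  have h2 : star V * V = 1 := Matrix.mem_unitaryGroup_iff'.mp
    (Matrix.IsHermitian.eigenvectorUnitary hH).2
  have hVs : V * star V = 1 := Matrix.mem_unitaryGroup_iff.mp
    (Matrix.IsHermitian.eigenvectorUnitary hH).2
  have e1 : (V * Λ * star V) * (V * Λ * star V) = V * Λ * (star V * V) * (Λ * star V) := by
    noncomm_ring
  have e2 : V * Λ * (star V * V) * (Λ * star V) = V * (Λ * Λ) * star V := by
    rw [h2, Matrix.mul_one]; noncomm_ring
  have e3 : V * (1 - Λ * Λ) * star V = V * star V - V * (Λ * Λ) * star V := by noncomm_ring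
  have key : (1 : Matrix d d ℂ) - D * D = V * (1 - Λ * Λ) * star V := by
    rw [hs, e1, e2, e3, hVs]
  have hdiag : (1 : Matrix d d ℂ) - Λ * Λ
      = Matrix.diagonal (fun i => ((1 - hH.eigenvalues i ^ 2 : ℝ) : ℂ)) := by
    rw [hΛ, Matrix.diagonal_mul_diagonal, ← Matrix.diagonal_one, Matrix.diagonal_sub]
    congr 1; funext i
    simp [Function.comp]
    push_cast; ring
  rw [key, hdiag]
  have hpsd : (Matrix.diagonal (fun i => ((1 - hH.eigenvalues i ^ 2 : ℝ) : ℂ))).PosSemidef :=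
    Matrix.posSemidef_diagonal_iff.mpr fun i => by
      rw [Complex.zero_le_real]
      nlinarith [hev0 i, hev1 i]
  simpa [Matrix.star_eq_conjTranspose] using hpsd.mul_mul_conjTranspose_same V

end aux

/-- Double sandwich bound: if `Π' ≤ a·ρ̄`, `Π₂ ρ̄ Π₂ ≤ b·Π₂`, `0 ≤ Π₂, D ≤ I`, `Π' ≥ 0`,
`ρ, ρ̄ ≥ 0` and `Tr[ρ] ≤ 1`, then `Tr[D Π₂ Π' Π₂ D ρ] ≤ a·b`. -/
theorem double_sandwich {d : Type*} [Fintype d] [DecidableEq d]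
    (ρ ρb : Matrix d d ℂ) (hρ : ρ.PosSemidef) (hρb : ρb.PosSemidef)
    (hρtr : (ρ.trace).re ≤ 1)
    (P' : Matrix d d ℂ) (hP' : P'.PosSemidef)
    (a : ℝ) (ha : 0 ≤ a) (haP : ((a : ℂ) • ρb - P').PosSemidef)
    (P₂ D : Matrix d d ℂ)
    (hP₂ : P₂.PosSemidef) (hP₂I : ((1 : Matrix d d ℂ) - P₂).PosSemidef)
    (hD : D.PosSemidef) (hDI : ((1 : Matrix d d ℂ) - D).PosSemidef)
    (b : ℝ) (hb : 0 ≤ b) (hbP : ((b : ℂ) • P₂ - P₂ * ρb * P₂).PosSemidef) :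
    ((D * P₂ * P' * P₂ * D * ρ).trace).re ≤ a * b := by
  -- D ρ D is PSD
  have hDρD : (D * ρ * D).PosSemidef := by
    have := hρ.mul_mul_conjTranspose_same D
    rwa [hD.1.eq] at this
  -- M := P₂ D ρ D P₂ is PSD
  have hM : (P₂ * (D * ρ * D) * P₂).PosSemidef := by
    have := hDρD.mul_mul_conjTranspose_same P₂
    rwa [hP₂.1.eq] at this
  -- D P₂ D ≤ 1
  have hDPD : ((1 : Matrix d d ℂ) - D * P₂ * D).PosSemidef := by
    have h1 : (D * ((1 : Matrix d d ℂ) - P₂) * D).PosSemidef := by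
      have := hP₂I.mul_mul_conjTranspose_same D
      rwa [hD.1.eq] at this
    have h2 := sq_le_one hD hDI
    have : (1 : Matrix d d ℂ) - D * P₂ * D
        = ((1 : Matrix d d ℂ) - D * D) + D * ((1 : Matrix d d ℂ) - P₂) * D := by
      noncomm_ring
    rw [this]
    exact h2.add h1
  -- Step 1: cyclicity
  have t0 : (D * P₂ * P' * P₂ * D * ρ).trace = (P' * (P₂ * (D * ρ * D) * P₂)).trace := by
    rw [show D * P₂ * P' * P₂ * D * ρ = (D * P₂) * (P' * (P₂ * D * ρ)) by noncomm_ring,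
      Matrix.trace_mul_comm]
    congr 1; noncomm_ring
  -- Step 2: P' ≤ a ρb
  have t1 : (P' * (P₂ * (D * ρ * D) * P₂)).trace
      ≤ (a : ℂ) * (ρb * (P₂ * (D * ρ * D) * P₂)).trace := by
    have := tr_mul_mono haP hM
    rwa [Matrix.smul_mul, Matrix.trace_smul, smul_eq_mul] at this
  -- Step 3: cyclicity + sandwich with P₂
  have t2 : (ρb * (P₂ * (D * ρ * D) * P₂)).trace = ((P₂ * ρb * P₂) * (D * ρ * D)).trace := by
    rw [show ρb * (P₂ * (D * ρ * D) * P₂) = (ρb * P₂ * (D * ρ * D)) * P₂ by noncomm_ring,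
      Matrix.trace_mul_comm]
    congr 1; noncomm_ring
  have t3 : ((P₂ * ρb * P₂) * (D * ρ * D)).trace ≤ (b : ℂ) * (P₂ * (D * ρ * D)).trace := by
    have := tr_mul_mono hbP hDρD
    rwa [Matrix.smul_mul, Matrix.trace_smul, smul_eq_mul] at this
  -- Step 4: cyclicity + D P₂ D ≤ 1
  have t4 : (P₂ * (D * ρ * D)).trace = ((D * P₂ * D) * ρ).trace := by
    rw [show P₂ * (D * ρ * D) = (P₂ * D * ρ) * D by noncomm_ring, Matrix.trace_mul_comm]
    congr 1; noncomm_ring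
  have t5 : ((D * P₂ * D) * ρ).trace ≤ ρ.trace := by
    have := tr_mul_mono hDPD hρ
    rwa [Matrix.one_mul] at this
  -- trace of ρ is a nonneg real
  have hρtr0 : 0 ≤ ρ.trace := tr_nonneg hρ
  have hρim : ρ.trace.im = 0 := (Complex.le_def.mp hρtr0).2.symm
  have hρre : 0 ≤ ρ.trace.re := by simpa using (Complex.le_def.mp hρtr0).1
  -- combine
  have hbρ : (b : ℂ) * (P₂ * (D * ρ * D)).trace ≤ (b : ℂ) * ρ.trace := by
    rw [t4]
    exact mul_le_mul_of_nonneg_left t5 (by simpa using hb)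
  have h1 : (ρb * (P₂ * (D * ρ * D) * P₂)).trace ≤ (b : ℂ) * ρ.trace :=
    le_trans (by rw [t2]; exact t3) hbρ
  have h2 : (D * P₂ * P' * P₂ * D * ρ).trace ≤ (a : ℂ) * ((b : ℂ) * ρ.trace) := by
    rw [t0]
    exact le_trans t1 (mul_le_mul_of_nonneg_left h1 (by simpa using ha))
  have h3 := (Complex.le_def.mp h2).1
  have : ((a : ℂ) * ((b : ℂ) * ρ.trace)).re = a * (b * ρ.trace.re) := by
    simp [Complex.mul_re, hρim]
  rw [this] at h3
  calc ((D * P₂ * P' * P₂ * D * ρ).trace).re ≤ a * (b * ρ.trace.re) := h3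
    _ ≤ a * b := mul_le_mul_of_nonneg_left (by nlinarith : b * ρ.trace.re ≤ b) ha
end
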